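/- Let A be a real n×n matrix. A is normally elliptic if and only if for every symmetric positive definite matrix G ∈ ℝ^{n×n} there exists a symmetric positive definite matrix H ∈ ℝ^{n×n} such that H·A + Aᵀ·H = G. -/

import Mathlib

open Matrix

/-- A real square matrix is *normally elliptic* if every eigenvalue
(i.e. every element of the spectrum of the associated complex matrix)
has positive real part. -/
def NormallyElliptic {n : ℕ} (A : Matrix (Fin n) (Fin n) ℝ) : Prop :=
  ∀ μ ∈ spectrum ℂ (A.map Complex.ofReal), 0 < μ.re

/-- A (possibly nonsymmetric) real matrix is positive definite if `zᵀ M z > 0`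
for all nonzero `z ∈ ℝⁿ`. -/
def PosDefMat {n : ℕ} (M : Matrix (Fin n) (Fin n) ℝ) : Prop :=
  ∀ z : Fin n → ℝ, z ≠ 0 → 0 < z ⬝ᵥ M.mulVec z

open Polynomial

noncomputable section
namespace NELyap

variable {n : ℕ}


variable {n : ℕ}

/-- spectrum membership via determinant. -/
lemma mem_spectrum_iff_det {K : Type*} [Field K] {M : Matrix (Fin n) (Fin n) K} {μ : K} :
    μ ∈ spectrum K M ↔ (μ • (1 : Matrix (Fin n) (Fin n) K) - M).det = 0 := by
  rw [spectrum.mem_iff, Matrix.isUnit_iff_isUnit_det, isUnit_iff_ne_zero, not_not,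
    Algebra.algebraMap_eq_smul_one]

lemma eval_charpoly' {K : Type*} [Field K] (M : Matrix (Fin n) (Fin n) K) (μ : K) :
    M.charpoly.eval μ = (μ • (1 : Matrix (Fin n) (Fin n) K) - M).det := by
  rw [Matrix.charpoly, ← Polynomial.coe_evalRingHom, RingHom.map_det]
  congr 1
  ext i j
  by_cases h : i = j <;>
    simp [h, Matrix.charmatrix_apply, Matrix.one_apply, Matrix.diagonal_apply]

lemma spectrum_transpose {K : Type*} [Field K] (M : Matrix (Fin n) (Fin n) K) :
    spectrum K Mᵀ = spectrum K M := by
  ext μ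
  rw [mem_spectrum_iff_det, mem_spectrum_iff_det, ← Matrix.det_transpose]
  congr! 1
  rw [Matrix.transpose_sub, Matrix.transpose_smul, Matrix.transpose_one, Matrix.transpose_transpose]



def NE (A : Matrix (Fin n) (Fin n) ℝ) : Prop :=
  ∀ μ ∈ spectrum ℂ (A.map Complex.ofReal), 0 < μ.re

def cM (A : Matrix (Fin n) (Fin n) ℝ) : Matrix (Fin n) (Fin n) ℂ :=
  A.map Complex.ofReal

lemma cM_mul (A B : Matrix (Fin n) (Fin n) ℝ) : cM (A * B) = cM A * cM B :=
  Matrix.map_mul (f := Complex.ofRealHom)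

lemma cM_add (A B : Matrix (Fin n) (Fin n) ℝ) : cM (A + B) = cM A + cM B :=
  Matrix.map_add _ (by simp) _ _

lemma cM_transpose (A : Matrix (Fin n) (Fin n) ℝ) : cM Aᵀ = (cM A)ᵀ := by
  ext i j; simp [cM]

lemma cM_zero : cM (0 : Matrix (Fin n) (Fin n) ℝ) = 0 := by
  ext i j; simp [cM]

lemma cM_inj {A B : Matrix (Fin n) (Fin n) ℝ} (h : cM A = cM B) : A = B := by
  ext i j
  have := congrFun (congrFun h i) j
  simpa [cM, Matrix.map_apply] using this

def lyap (A : Matrix (Fin n) (Fin n) ℝ) :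
    Matrix (Fin n) (Fin n) ℝ →ₗ[ℝ] Matrix (Fin n) (Fin n) ℝ :=
  LinearMap.mulRight ℝ A + LinearMap.mulLeft ℝ Aᵀ

lemma lyap_apply (A H : Matrix (Fin n) (Fin n) ℝ) : lyap A H = H * A + Aᵀ * H := rfl

lemma lyap_injective {A : Matrix (Fin n) (Fin n) ℝ} (hA : NE A) :
    Function.Injective (lyap A) := by
  rcases Nat.eq_zero_or_pos n with hn | hn
  · subst hn; intro x y _; apply Subsingleton.elim
  have : NeZero n := ⟨hn.ne'⟩
  rw [← LinearMap.ker_eq_bot, LinearMap.ker_eq_bot']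
  intro H h0
  rw [lyap_apply] at h0
  -- complexify
  have hc : cM H * cM A = (-(cM A)ᵀ) * cM H := by
    have := congrArg cM h0
    rw [cM_add, cM_mul, cM_mul, cM_transpose, cM_zero] at this
    linear_combination (norm := (noncomm_ring; try ring)) this
  set Ac := cM A with hAc
  set B := -(cM A)ᵀ with hB
  -- commute through powers
  have hpow : ∀ k : ℕ, cM H * Ac ^ k = B ^ k * cM H := by
    intro k
    induction k with
    | zero => simp
    | succ k ih =>
      rw [pow_succ, ← mul_assoc, ih, mul_assoc, hc, pow_succ, mul_assoc]
  -- commute through polynomials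
  have hpoly : ∀ p : ℂ[X], cM H * aeval Ac p = aeval B p * cM H := by
    intro p
    induction p using Polynomial.induction_on' with
    | add p q hp hq => rw [map_add, map_add, mul_add, add_mul, hp, hq]
    | monomial k c =>
      rw [aeval_monomial, aeval_monomial, ← mul_assoc, ← Algebra.commutes,
        mul_assoc, hpow, ← mul_assoc]
  have hCH : cM H * aeval Ac Ac.charpoly = aeval B Ac.charpoly * cM H := hpoly _
  rw [Matrix.aeval_self_charpoly, mul_zero] at hCH
  -- `aeval B p` is a unit
  have hspec : spectrum ℂ (aeval B Ac.charpoly) =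
      (fun k => Ac.charpoly.eval k) '' spectrum ℂ B := by
    apply spectrum.map_polynomial_aeval_of_degree_pos
    rw [Matrix.charpoly_degree_eq_dim]
    simpa using hn
  have hunit : IsUnit (aeval B Ac.charpoly) := by
    have h0s : (0 : ℂ) ∉ spectrum ℂ (aeval B Ac.charpoly) := by
      rw [hspec]
      rintro ⟨μ, hμ, hev⟩
      -- μ ∈ spectrum B means -μ ∈ spectrum Ac
      have hμ' : -μ ∈ spectrum ℂ Ac := by
        rw [hB, ← spectrum.neg_eq, Set.mem_neg] at hμ
        rwa [← spectrum_transpose Ac]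
      have h1 : 0 < (-μ).re := hA _ hμ'
      -- eval μ charpoly = 0 means μ ∈ spectrum Ac
      have hμ2 : μ ∈ spectrum ℂ Ac := by
        rw [mem_spectrum_iff_det]
        simp only [eval_charpoly'] at hev
        exact hev
      have h2 : 0 < μ.re := hA _ hμ2
      simp only [Complex.neg_re] at h1
      linarith
    rw [spectrum.notMem_iff, map_zero, zero_sub] at h0s
    exact (IsUnit.neg_iff _).mp h0s
  have : cM H = 0 := hunit.mul_left_cancel (by rw [mul_zero, ← hCH])
  rw [← cM_zero] at this
  exact cM_inj this


def PDM (M : Matrix (Fin n) (Fin n) ℝ) : Prop :=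
  ∀ z : Fin n → ℝ, z ≠ 0 → 0 < z ⬝ᵥ M.mulVec z

lemma lyap_bijective {A : Matrix (Fin n) (Fin n) ℝ} (hA : NE A) :
    Function.Bijective (lyap A) :=
  ⟨lyap_injective hA, (LinearMap.injective_iff_surjective).mp (lyap_injective hA)⟩

lemma sol_symm {A H G : Matrix (Fin n) (Fin n) ℝ} (hA : NE A)
    (hG : G.IsSymm) (h : lyap A H = G) : H.IsSymm := by
  have h2 : lyap A Hᵀ = G := by
    rw [lyap_apply]
    calc Hᵀ * A + Aᵀ * Hᵀ = (H * A + Aᵀ * H)ᵀ := by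
          rw [Matrix.transpose_add, Matrix.transpose_mul, Matrix.transpose_mul,
            Matrix.transpose_transpose]
          exact add_comm _ _
      _ = Gᵀ := by rw [← lyap_apply, h]
      _ = G := hG
  exact lyap_injective hA (h2.trans h.symm)

lemma sol_nondeg {A H G : Matrix (Fin n) (Fin n) ℝ} (hH : H.IsSymm)
    (hG : PDM G) (h : lyap A H = G) :
    ∀ v : Fin n → ℝ, v ≠ 0 → H.mulVec v ≠ 0 := by
  intro v hv hHv
  have hGv : v ⬝ᵥ G.mulVec v = 0 := by
    rw [← h, lyap_apply, Matrix.add_mulVec, dotProduct_add, ← Matrix.mulVec_mulVec,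
      ← Matrix.mulVec_mulVec, hHv, Matrix.mulVec_zero, dotProduct_zero,
      Matrix.dotProduct_mulVec]
    rw [← hH, Matrix.vecMul_transpose, hHv]
    simp
  exact absurd hGv (ne_of_gt (hG v hv))

-- symmetric + all q ≥ 0 + nondegenerate ⇒ PDM
lemma pdm_of_psd_nondeg {H : Matrix (Fin n) (Fin n) ℝ} (hH : H.IsSymm)
    (hpsd : ∀ z : Fin n → ℝ, 0 ≤ z ⬝ᵥ H.mulVec z)
    (hnd : ∀ v : Fin n → ℝ, v ≠ 0 → H.mulVec v ≠ 0) : PDM H := by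
  have hps : H.PosSemidef := by
    apply Matrix.PosSemidef.of_dotProduct_mulVec_nonneg
    · rwa [Matrix.IsHermitian, Matrix.conjTranspose_eq_transpose_of_trivial]
    · intro x
      simpa using hpsd x
  intro z hz
  rcases lt_or_eq_of_le (hpsd z) with h | h
  · exact h
  · exfalso
    apply hnd z hz
    have := (hps.dotProduct_mulVec_zero_iff z).mp ?_
    · exact this
    · simpa using h.symm


section seg
variable {A : Matrix (Fin n) (Fin n) ℝ}

lemma cM_seg (s : ℝ) :
    cM ((1 - s) • 1 + s • A) =
      ((1 - s : ℝ) : ℂ) • 1 + ((s : ℝ) : ℂ) • cM A := by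
  ext i j
  by_cases h : i = j <;>
    simp [cM, Matrix.one_apply, h, Matrix.add_apply, Matrix.smul_apply]

lemma ne_segment [NeZero n] (hA : NE A) {s : ℝ} (hs : s ∈ Set.Icc (0:ℝ) 1) :
    NE ((1 - s) • 1 + s • A) := by
  intro μ hμ
  change μ ∈ spectrum ℂ (cM _) at hμ
  rw [cM_seg] at hμ
  rcases eq_or_lt_of_le hs.1 with h0 | h0
  · rw [← h0] at hμ
    norm_num at hμ
    simp [hμ]
  · have hs0 : ((s : ℝ) : ℂ) ≠ 0 := by
      simp only [ne_eq, Complex.ofReal_eq_zero]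
      exact ne_of_gt h0
    have hsm : ((s : ℝ) : ℂ) • cM A = (Units.mk0 _ hs0 : ℂˣ) • cM A := rfl
    rw [← Algebra.algebraMap_eq_smul_one, ← spectrum.singleton_add_eq, hsm,
      spectrum.unit_smul_eq_smul (cM A) (Units.mk0 _ hs0)] at hμ
    rcases Set.mem_add.mp hμ with ⟨a, ha, b, hb, hab⟩
    rcases hb with ⟨ν, hν, rfl⟩
    have hre : 0 < ν.re := hA ν hν
    rcases ha with rfl
    have : μ.re = (1 - s) + s * ν.re := by
      rw [← hab]
      simp [Units.smul_def, smul_eq_mul, Complex.re_ofReal_mul]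
    rw [this]
    nlinarith [hs.2]

end seg

section rep

def bb : Module.Basis (Fin n × Fin n) ℝ (Matrix (Fin n) (Fin n) ℝ) :=
  Matrix.stdBasis ℝ (Fin n) (Fin n)

def Nmat (A : Matrix (Fin n) (Fin n) ℝ) (s : ℝ) :
    Matrix (Fin n × Fin n) (Fin n × Fin n) ℝ :=
  LinearMap.toMatrix bb bb (lyap ((1 - s) • 1 + s • A))

lemma lyap_seg (A : Matrix (Fin n) (Fin n) ℝ) (s : ℝ) :
    lyap ((1 - s) • 1 + s • A) = (1 - s) • lyap 1 + s • lyap A := by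
  apply LinearMap.ext
  intro H
  simp only [lyap_apply, LinearMap.add_apply, LinearMap.smul_apply,
    Matrix.transpose_add, Matrix.transpose_smul, Matrix.transpose_one,
    Matrix.mul_add, Matrix.add_mul, Matrix.mul_smul, Matrix.smul_mul,
    Matrix.mul_one, Matrix.one_mul]
  module

lemma Nmat_eq (A : Matrix (Fin n) (Fin n) ℝ) (s : ℝ) :
    Nmat A s = (1 - s) • LinearMap.toMatrix bb bb (lyap 1)
      + s • LinearMap.toMatrix bb bb (lyap A) := by
  rw [Nmat, lyap_seg, map_add, _root_.map_smul, _root_.map_smul]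

lemma Nmat_continuous (A : Matrix (Fin n) (Fin n) ℝ) : Continuous (Nmat A) := by
  have hfn : Nmat A = fun s => (1 - s) • LinearMap.toMatrix bb bb (lyap 1)
      + s • LinearMap.toMatrix bb bb (lyap A) := funext (Nmat_eq A)
  rw [hfn]
  exact ((continuous_const.sub continuous_id).smul continuous_const).add
    (continuous_id.smul continuous_const)

lemma Nmat_isUnit {A : Matrix (Fin n) (Fin n) ℝ} (s : ℝ)
    (hbij : Function.Bijective (lyap ((1 - s) • 1 + s • A))) :
    IsUnit (Nmat A s) := by
  set T := lyap ((1 - s) • 1 + s • A) with hT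
  let E := LinearEquiv.ofBijective T hbij
  set M' := LinearMap.toMatrix bb bb (E.symm.toLinearMap) with hM'
  have h1 : Nmat A s * M' = 1 := by
    rw [Nmat, ← hT, hM', ← LinearMap.toMatrix_comp]
    have : T ∘ₗ E.symm.toLinearMap = LinearMap.id := by
      apply LinearMap.ext
      intro x
      exact E.apply_symm_apply x
    rw [this, LinearMap.toMatrix_id]
  have h2 : M' * Nmat A s = 1 := by
    rw [Nmat, ← hT, hM', ← LinearMap.toMatrix_comp]
    have : E.symm.toLinearMap ∘ₗ T = LinearMap.id := by
      apply LinearMap.ext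
      intro x
      exact E.symm_apply_apply x
    rw [this, LinearMap.toMatrix_id]
  exact ⟨⟨Nmat A s, M', h1, h2⟩, rfl⟩

def fsol (A G : Matrix (Fin n) (Fin n) ℝ) (s : ℝ) : Matrix (Fin n) (Fin n) ℝ :=
  bb.equivFun.symm ((Nmat A s)⁻¹ *ᵥ (bb.equivFun G))

lemma fsol_spec {A : Matrix (Fin n) (Fin n) ℝ} (G : Matrix (Fin n) (Fin n) ℝ) (s : ℝ)
    (h : IsUnit (Nmat A s)) :
    lyap ((1 - s) • 1 + s • A) (fsol A G s) = G := by
  apply bb.equivFun.injective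
  have hrep : ∀ (f : Matrix (Fin n) (Fin n) ℝ →ₗ[ℝ] Matrix (Fin n) (Fin n) ℝ)
      (x : Matrix (Fin n) (Fin n) ℝ),
      bb.equivFun (f x) = (LinearMap.toMatrix bb bb f) *ᵥ (bb.equivFun x) := by
    intro f x
    funext i
    rw [Module.Basis.equivFun_apply, ← LinearMap.toMatrix_mulVec_repr bb bb f x]
    congr
  have hfold : (LinearMap.toMatrix bb bb) (lyap ((1 - s) • 1 + s • A)) = Nmat A s := rfl
  rw [hrep, fsol, LinearEquiv.apply_symm_apply, hfold, Matrix.mulVec_mulVec,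
    Matrix.mul_nonsing_inv _ ((Matrix.isUnit_iff_isUnit_det _).mp h), Matrix.one_mulVec]

end rep

section forward
variable {A : Matrix (Fin n) (Fin n) ℝ}

lemma fsol_continuousOn [NeZero n] (hA : NE A) (G : Matrix (Fin n) (Fin n) ℝ) :
    ContinuousOn (fsol A G) (Set.Icc 0 1) := by
  have hinv : ∀ s ∈ Set.Icc (0:ℝ) 1, IsUnit (Nmat A s) := fun s hs =>
    Nmat_isUnit s (lyap_bijective (ne_segment hA hs))
  have hNinv : ContinuousOn (fun s => (Nmat A s)⁻¹) (Set.Icc 0 1) := by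
    intro s hs
    apply ContinuousAt.continuousWithinAt
    have hdet : (Nmat A s).det ≠ 0 :=
      ((Matrix.isUnit_iff_isUnit_det _).mp (hinv s hs)).ne_zero
    have h1 : ContinuousAt Ring.inverse ((Nmat A s).det) := by
      rw [Ring.inverse_eq_inv']
      exact continuousAt_inv₀ hdet
    exact (continuousAt_matrix_inv _ h1).comp (Nmat_continuous A).continuousAt
  have hsymm : Continuous (fun v : (Fin n × Fin n) → ℝ => bb.equivFun.symm v) := by
    exact LinearMap.continuous_of_finiteDimensional
      (bb.equivFun.symm.toLinearMap :
        ((Fin n × Fin n) → ℝ) →ₗ[ℝ] Matrix (Fin n) (Fin n) ℝ)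
  have houter : Continuous (fun N : Matrix (Fin n × Fin n) (Fin n × Fin n) ℝ =>
      bb.equivFun.symm (N *ᵥ bb.equivFun G)) :=
    hsymm.comp (continuous_id.matrix_mulVec continuous_const)
  exact houter.comp_continuousOn hNinv

lemma forward_core [NeZero n] (hA : NE A) {G : Matrix (Fin n) (Fin n) ℝ}
    (hGs : G.IsSymm) (hG : PDM G) :
    ∃ H, H.IsSymm ∧ PDM H ∧ lyap A H = G := by
  have hinv : ∀ s ∈ Set.Icc (0:ℝ) 1, IsUnit (Nmat A s) := fun s hs =>
    Nmat_isUnit s (lyap_bijective (ne_segment hA hs))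
  have hspec : ∀ s ∈ Set.Icc (0:ℝ) 1,
      lyap ((1 - s) • 1 + s • A) (fsol A G s) = G := fun s hs =>
    fsol_spec G s (hinv s hs)
  have hsymm : ∀ s ∈ Set.Icc (0:ℝ) 1, (fsol A G s).IsSymm := fun s hs =>
    sol_symm (ne_segment hA hs) hGs (hspec s hs)
  have hnd : ∀ s ∈ Set.Icc (0:ℝ) 1, ∀ v : Fin n → ℝ, v ≠ 0 →
      (fsol A G s).mulVec v ≠ 0 := fun s hs =>
    sol_nondeg (hsymm s hs) hG (hspec s hs)
  -- value at 0
  have e0 : (1 - (0:ℝ)) • (1 : Matrix (Fin n) (Fin n) ℝ) + (0:ℝ) • A = 1 := by simp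
  have hNE1 : NE (1 : Matrix (Fin n) (Fin n) ℝ) := by
    have := ne_segment hA (Set.left_mem_Icc.mpr zero_le_one)
    rwa [e0] at this
  have hzero : fsol A G 0 = (2⁻¹ : ℝ) • G := by
    apply lyap_injective hNE1
    have h1 := hspec 0 (Set.left_mem_Icc.mpr zero_le_one)
    rw [e0] at h1
    rw [h1, lyap_apply, Matrix.transpose_one, Matrix.mul_one, Matrix.one_mul, ← add_smul]
    norm_num
  have hPD0 : PDM (fsol A G 0) := by
    rw [hzero]
    intro z hz
    rw [Matrix.smul_mulVec, dotProduct_smul, smul_eq_mul]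
    have := hG z hz
    positivity
  -- topology on the subtype
  have : ConnectedSpace ↥(Set.Icc (0:ℝ) 1) :=
    Subtype.connectedSpace ⟨Set.nonempty_Icc.mpr zero_le_one, isPreconnected_Icc⟩
  set I := ↥(Set.Icc (0:ℝ) 1)
  let F : I → Matrix (Fin n) (Fin n) ℝ := fun s => fsol A G s.1
  have hF : Continuous F := by
    have := (continuousOn_iff_continuous_restrict).mp (fsol_continuousOn hA G)
    exact this
  let q : I × (Fin n → ℝ) → ℝ := fun p => p.2 ⬝ᵥ (F p.1).mulVec p.2
  have hq : Continuous q :=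
    (continuous_snd.dotProduct ((hF.comp continuous_fst).matrix_mulVec continuous_snd))
  let P : Set I := {s | PDM (F s)}
  let V : Set I := {s | ∃ z, q (s, z) < 0}
  let W : Set I := {s | ∃ z : Fin n → ℝ, ‖z‖ = 1 ∧ q (s, z) ≤ 0}
  have hVopen : IsOpen V := by
    have : V = ⋃ z : Fin n → ℝ, {s : I | q (s, z) < 0} := by
      ext s; simp [V, Set.mem_iUnion]
    rw [this]
    exact isOpen_iUnion fun z =>
      isOpen_lt (hq.comp (continuous_id.prodMk continuous_const)) continuous_const
  have hWclosed : IsClosed W := by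
    let K : Set (I × (Fin n → ℝ)) := {p | ‖p.2‖ = 1 ∧ q p ≤ 0}
    have hKclosed : IsClosed K :=
      (isClosed_eq (continuous_norm.comp continuous_snd) continuous_const).inter
        (isClosed_le hq continuous_const)
    have hKcompact : IsCompact K := by
      apply IsCompact.of_isClosed_subset
        (isCompact_univ.prod (isCompact_sphere (0 : Fin n → ℝ) 1)) hKclosed
      rintro ⟨s, z⟩ ⟨h1, _⟩
      exact ⟨Set.mem_univ _, by simpa [mem_sphere_iff_norm] using h1⟩
    have hWim : W = Prod.fst '' K := by
      ext s
      constructor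
      · rintro ⟨z, h1, h2⟩; exact ⟨(s, z), ⟨h1, h2⟩, rfl⟩
      · rintro ⟨⟨s', z⟩, ⟨h1, h2⟩, rfl⟩; exact ⟨z, h1, h2⟩
    rw [hWim]
    exact (hKcompact.image continuous_fst).isClosed
  -- P = Wᶜ
  have hPW : P = Wᶜ := by
    ext s
    constructor
    · intro hP hW
      rcases hW with ⟨z, hz1, hz2⟩
      have hzne : z ≠ 0 := by
        intro h; rw [h] at hz1; simp at hz1
      exact absurd hz2 (not_le.mpr (hP z hzne))
    · intro hW z hzne
      by_contra hle
      push_neg at hle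
      have hnorm : ‖z‖ ≠ 0 := norm_ne_zero_iff.mpr hzne
      refine hW ⟨‖z‖⁻¹ • z, ?_, ?_⟩
      · rw [norm_smul, Real.norm_eq_abs, abs_inv, abs_norm]
        field_simp
      · have heq : q (s, ‖z‖⁻¹ • z) = ‖z‖⁻¹ * (‖z‖⁻¹ * q (s, z)) := by
          simp only [q, Matrix.mulVec_smul, smul_dotProduct, dotProduct_smul,
            smul_eq_mul]
        rw [heq]
        have h2 : (0:ℝ) ≤ ‖z‖⁻¹ := inv_nonneg.mpr (norm_nonneg _)
        nlinarith [mul_nonneg h2 h2]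
  -- P = Vᶜ
  have hPV : P = Vᶜ := by
    ext s
    constructor
    · intro hP hV
      rcases hV with ⟨z, hz⟩
      have hzne : z ≠ 0 := by
        intro h; rw [h] at hz; simp [q] at hz
      exact absurd hz (not_lt.mpr (le_of_lt (hP z hzne)))
    · intro hV
      apply pdm_of_psd_nondeg (hsymm s.1 s.2) _ (hnd s.1 s.2)
      intro z
      by_contra hlt
      push_neg at hlt
      exact hV ⟨z, hlt⟩
  have hclopen : IsClopen P := by
    constructor
    · rw [hPV]; exact hVopen.isClosed_compl
    · rw [hPW]; exact hWclosed.isOpen_compl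
  have h0mem : (⟨0, Set.left_mem_Icc.mpr zero_le_one⟩ : I) ∈ P := hPD0
  have hPuniv : P = Set.univ := hclopen.eq_univ ⟨_, h0mem⟩
  have h1mem : (⟨1, Set.right_mem_Icc.mpr zero_le_one⟩ : I) ∈ P := by
    rw [hPuniv]; trivial
  refine ⟨fsol A G 1, hsymm 1 (Set.right_mem_Icc.mpr zero_le_one), h1mem, ?_⟩
  have := hspec 1 (Set.right_mem_Icc.mpr zero_le_one)
  have e1 : (1 - (1:ℝ)) • (1 : Matrix (Fin n) (Fin n) ℝ) + (1:ℝ) • A = A := by simp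
  rwa [e1] at this

end forward

section backward

def cV (x : Fin n → ℝ) : Fin n → ℂ := fun i => (x i : ℂ)

lemma quad_cast (H : Matrix (Fin n) (Fin n) ℝ) (x y : Fin n → ℝ) :
    cV x ⬝ᵥ (cM H) *ᵥ (cV y) = ((x ⬝ᵥ H *ᵥ y : ℝ) : ℂ) := by
  simp only [dotProduct, Matrix.mulVec, cM, cV, Matrix.map_apply]
  push_cast
  rfl

lemma quad_symm {H : Matrix (Fin n) (Fin n) ℝ} (hH : H.IsSymm) (x y : Fin n → ℝ) :
    x ⬝ᵥ H *ᵥ y = y ⬝ᵥ H *ᵥ x := by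
  rw [Matrix.dotProduct_mulVec, ← Matrix.mulVec_transpose, hH, dotProduct_comm]

lemma quad_nonneg {H : Matrix (Fin n) (Fin n) ℝ} (hH : PDM H) (x : Fin n → ℝ) :
    0 ≤ x ⬝ᵥ H *ᵥ x := by
  rcases eq_or_ne x 0 with rfl | hx
  · simp
  · exact le_of_lt (hH x hx)

lemma backward {A : Matrix (Fin n) (Fin n) ℝ}
    (h : ∀ G : Matrix (Fin n) (Fin n) ℝ, G.IsSymm → PDM G →
      ∃ H : Matrix (Fin n) (Fin n) ℝ, H.IsSymm ∧ PDM H ∧ H * A + Aᵀ * H = G) :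
    NE A := by
  obtain ⟨H, hHs, hHpd, hHl⟩ := h 1 (by simp [Matrix.IsSymm, Matrix.transpose_one])
    (by
      intro z hz
      rw [Matrix.one_mulVec]
      obtain ⟨i, hi⟩ : ∃ i, z i ≠ 0 := by
        by_contra hc
        push_neg at hc
        exact hz (funext hc)
      apply Finset.sum_pos' (fun j _ => mul_self_nonneg (z j))
      exact ⟨i, Finset.mem_univ i, mul_self_pos.mpr hi⟩)
  intro μ hμ
  -- eigenvector
  rw [mem_spectrum_iff_det] at hμ
  obtain ⟨v, hv, hveq⟩ := (Matrix.exists_mulVec_eq_zero_iff).mpr hμ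
  have heig : cM A *ᵥ v = μ • v := by
    have := hveq
    rw [Matrix.sub_mulVec, Matrix.smul_mulVec, Matrix.one_mulVec, sub_eq_zero] at this
    exact this.symm
  -- conjugate eigen relation
  have hconjT : (cM A)ᴴ = (cM A)ᵀ := by
    ext i j
    simp [cM, Matrix.conjTranspose_apply, Matrix.map_apply]
  have hstar : cM A *ᵥ star v = star (μ • v) := by
    rw [← heig, Matrix.star_mulVec, hconjT, ← Matrix.mulVec_transpose,
      Matrix.transpose_transpose]
  -- the scalar quantities
  set x : Fin n → ℝ := fun i => (v i).re with hx
  set y : Fin n → ℝ := fun i => (v i).im with hy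
  have hvdecomp : v = cV x + Complex.I • cV y := by
    funext i
    simp [cV, hx, hy, Complex.ext_iff]
  have hstardecomp : star v = cV x - Complex.I • cV y := by
    funext i
    simp [cV, hx, hy, Complex.ext_iff, Pi.star_apply, RCLike.star_def]
  set r : ℝ := x ⬝ᵥ H *ᵥ x + y ⬝ᵥ H *ᵥ y with hr
  have h0 : star v ⬝ᵥ (cM H) *ᵥ v = (r : ℂ) := by
    rw [hstardecomp, hvdecomp]
    simp only [Matrix.mulVec_add, dotProduct_add, sub_dotProduct,
      Matrix.mulVec_smul, dotProduct_smul, smul_dotProduct,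
      quad_cast, smul_eq_mul]
    rw [quad_symm hHs y x]
    push_cast [hr]
    linear_combination (-((y ⬝ᵥ H *ᵥ y : ℝ) : ℂ)) * Complex.I_sq
  -- positivity of r
  have hvne0 : x ≠ 0 ∨ y ≠ 0 := by
    by_contra hc
    push_neg at hc
    apply hv
    funext i
    have h1 := congrFun hc.1 i
    have h2 := congrFun hc.2 i
    simp only [hx, hy, Pi.zero_apply] at h1 h2
    exact Complex.ext h1 h2
  have hrpos : 0 < r := by
    rcases hvne0 with hx0 | hy0
    · have := hHpd x hx0
      have h2 := quad_nonneg hHpd y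
      rw [hr]; linarith
    · have := hHpd y hy0
      have h2 := quad_nonneg hHpd x
      rw [hr]; linarith
  -- main identity
  have hmain : (μ + (starRingEnd ℂ) μ) * (r : ℂ) = star v ⬝ᵥ v := by
    have hG : cM (H * A) + cM (Aᵀ * H) = 1 := by
      rw [← cM_add]
      rw [hHl]
      ext i j
      by_cases hij : i = j <;> simp [cM, Matrix.one_apply, hij]
    have hcalc := congrArg (fun M => star v ⬝ᵥ M *ᵥ v) hG
    simp only [Matrix.add_mulVec, dotProduct_add, Matrix.one_mulVec] at hcalc
    rw [cM_mul, cM_mul, cM_transpose] at hcalc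
    -- first term
    have t1 : star v ⬝ᵥ (cM H * cM A) *ᵥ v = μ * (r:ℂ) := by
      rw [← Matrix.mulVec_mulVec, heig, Matrix.mulVec_smul, dotProduct_smul, h0]
      simp
    -- second term
    have t2 : star v ⬝ᵥ ((cM A)ᵀ * cM H) *ᵥ v = (starRingEnd ℂ) μ * (r:ℂ) := by
      rw [← Matrix.mulVec_mulVec, Matrix.dotProduct_mulVec, Matrix.vecMul_transpose,
        hstar, star_smul, smul_dotProduct, h0]
      rfl
    rw [t1, t2] at hcalc
    rw [add_mul]
    exact hcalc
  -- conclude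
  have hvv : star v ⬝ᵥ v = ((∑ i, Complex.normSq (v i) : ℝ) : ℂ) := by
    simp only [dotProduct, Pi.star_apply]
    push_cast
    congr 1
    funext i
    rw [RCLike.star_def, Complex.normSq_eq_conj_mul_self]
  have hvvpos : 0 < ∑ i, Complex.normSq (v i) := by
    obtain ⟨i, hi⟩ : ∃ i, v i ≠ 0 := by
      by_contra hc
      push_neg at hc
      exact hv (funext hc)
    apply Finset.sum_pos' (fun j _ => Complex.normSq_nonneg (v j))
    exact ⟨i, Finset.mem_univ i, Complex.normSq_pos.mpr hi⟩
  rw [hvv, Complex.add_conj] at hmain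
  have hre := congrArg Complex.re hmain
  have hre2 : 2 * μ.re * r = ∑ i, Complex.normSq (v i) := by
    have := hre
    push_cast at this
    simpa using this
  nlinarith

end backward
end NELyap


/-- Lyapunov theorem characterization: `A` is normally elliptic iff for every
symmetric positive definite `G` there is a symmetric positive definite `H` with
`H·A + Aᵀ·H = G`. -/
theorem normallyElliptic_iff_lyapunov {n : ℕ} (A : Matrix (Fin n) (Fin n) ℝ) :
    NormallyElliptic A ↔
      ∀ G : Matrix (Fin n) (Fin n) ℝ, G.IsSymm → PosDefMat G →
        ∃ H : Matrix (Fin n) (Fin n) ℝ, H.IsSymm ∧ PosDefMat H ∧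
          H * A + Aᵀ * H = G := by
  constructor
  · intro hA G hGs hGpd
    rcases Nat.eq_zero_or_pos n with hn | hn
    · subst hn
      refine ⟨0, by simp [Matrix.IsSymm], ?_, ?_⟩
      · intro z hz
        exact absurd (Subsingleton.elim z 0) hz
      · ext i j
        exact i.elim0
    · have : NeZero n := ⟨hn.ne'⟩
      obtain ⟨H, h1, h2, h3⟩ := NELyap.forward_core hA hGs hGpd
      exact ⟨H, h1, h2, (NELyap.lyap_apply A H).symm.trans h3⟩
  · intro h
    exact NELyap.backward h
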